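/- On a complete graph, for any finitely supported f and all t ≥ 0, the Dirichlet energy of the heat semigroup satisfies Q(P_t f) = ‖Γ(P_t f)‖_{ℓ¹(V,m)} ≤ C ‖f‖_{ℓ²_m} ‖Δf‖_{ℓ²_m}, where C is a universal constant. -/

import Mathlib

open scoped BigOperators
open Filter

/-- The carré du champ operator. -/
noncomputable def gam {V : Type*} (m : V → ℝ) (μ : V → V → ℝ) (f g : V → ℝ) (x : V) : ℝ :=
  (1 / (2 * m x)) * ∑' y, μ x y * (f y - f x) * (g y - g x)

/-- The formal graph Laplacian. -/
noncomputable def lap {V : Type*} (m : V → ℝ) (μ : V → V → ℝ) (f : V → ℝ) (x : V) : ℝ :=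
  (1 / m x) * ∑' y, μ x y * (f y - f x)

/-- The Dirichlet energy `Q(f) = (1/2) ∑_{x,y} μ_{xy} (f y - f x)²`. -/
noncomputable def QN {V : Type*} (μ : V → V → ℝ) (f : V → ℝ) : ℝ :=
  (1 / 2) * ∑' p : V × V, μ p.1 p.2 * (f p.2 - f p.1) ^ 2

/-- The `ℓ²(V,m)` norm. -/
noncomputable def l2n {V : Type*} (m : V → ℝ) (f : V → ℝ) : ℝ :=
  Real.sqrt (∑' x, f x ^ 2 * m x)

/-- The iterated carré du champ `Γ₂(f) = (1/2) Δ Γ(f) - Γ(f, Δ f)`. -/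
noncomputable def gam2 {V : Type*} (m : V → ℝ) (μ : V → V → ℝ) (f : V → ℝ) (x : V) : ℝ :=
  (1 / 2) * lap m μ (fun y => gam m μ f f y) x - gam m μ f (lap m μ f) x

/-- Elementary inequality used for the Caccioppoli-type estimate. -/
lemma stmt8_aux_abs (p q a b : ℝ) :
    |((b + a) / 2) * (q ^ 2 - p ^ 2) * (b - a)| ≤
      1 / 2 * (((p ^ 2 + q ^ 2) / 2) * (b - a) ^ 2) + (b ^ 2 + a ^ 2) * (q - p) ^ 2 := by
  rw [abs_le]
  constructor <;>
  nlinarith [sq_nonneg ((q + p) * (b - a) / 2 - (b + a) * (q - p)),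
    sq_nonneg ((q + p) * (b - a) / 2 + (b + a) * (q - p)),
    sq_nonneg (q - p), sq_nonneg (b - a), sq_nonneg (q + p), sq_nonneg (b + a),
    sq_nonneg ((q - p) * (b - a)), sq_nonneg ((q + p) * (b - a)),
    sq_nonneg ((b + a) * (q - p))]

set_option maxHeartbeats 2000000 in
/-- On a complete graph, the Dirichlet energy of `P_t f` for finitely supported `f` is
uniformly bounded: `Q(P_t f) = ‖Γ(P_t f)‖_{ℓ¹_m} ≤ C ‖f‖₂ ‖Δf‖₂`. -/
theorem stmt8 {V : Type*} (m : V → ℝ) (μ : V → V → ℝ)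
    (hm : ∀ x, 0 < m x) (hsym : ∀ x y, μ x y = μ y x)
    (hnn : ∀ x y, 0 ≤ μ x y) (hlf : ∀ x, (Function.support (μ x)).Finite)
    -- completeness of the graph: cut-off functions `η_k`
    (η : ℕ → V → ℝ)
    (hηfin : ∀ k, (Function.support (η k)).Finite)
    (hηmono : ∀ k x, η k x ≤ η (k + 1) x)
    (hηlim : ∀ x, Tendsto (fun k => η k x) atTop (nhds 1))
    (hηgam : ∀ k x, 1 ≤ k → gam m μ (η k) (η k) x ≤ 1 / (k : ℝ))
    -- the heat semigroup `P t = e^{tΔ}` and its standard properties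
    (P : ℝ → (V → ℝ) → V → ℝ)
    (hP0 : ∀ f, P 0 f = f)
    (hheat : ∀ (f : V → ℝ) (x : V) (t : ℝ), HasDerivAt (fun s => P s f x) (lap m μ (P t f) x) t)
    (hPcomm : ∀ f : V → ℝ, (Function.support f).Finite → ∀ t, P t (lap m μ f) = lap m μ (P t f))
    (hPl2 : ∀ f : V → ℝ, Summable (fun x => f x ^ 2 * m x) → ∀ t, 0 ≤ t →
      Summable (fun x => (P t f x) ^ 2 * m x) ∧ ∑' x, (P t f x) ^ 2 * m x ≤ ∑' x, f x ^ 2 * m x)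
    (hPsym : ∀ f g : V → ℝ, Summable (fun x => f x ^ 2 * m x) →
      Summable (fun x => g x ^ 2 * m x) → ∀ t, 0 ≤ t →
      ∑' x, P t f x * g x * m x = ∑' x, f x * P t g x * m x)
    (hPpos : ∀ f : V → ℝ, (∀ x, 0 ≤ f x) → ∀ t, 0 ≤ t → ∀ x, 0 ≤ P t f x)
    :
    ∃ C : ℝ, 0 < C ∧ ∀ f : V → ℝ, (Function.support f).Finite → ∀ t, 0 ≤ t →
      QN μ (P t f) = ∑' x, gam m μ (P t f) (P t f) x * m x ∧
      QN μ (P t f) ≤ C * l2n m f * l2n m (lap m μ f) := by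
  classical
  refine ⟨100, by norm_num, ?_⟩
  intro f hf t ht
  set g := P t f with hgdef
  set w := lap m μ f with hwdef
  have hmne : ∀ x : V, m x ≠ 0 := fun x => (hm x).ne'
  -- rows are summable, and equal to finite sums over sets containing the support of `μ x`
  have hμrow : ∀ (x : V) (F : V → ℝ), Summable (fun y => μ x y * F y) := by
    intro x F
    apply summable_of_ne_finset_zero (s := (hlf x).toFinset)
    intro y hy
    have h0 : μ x y = 0 := by
      by_contra h
      exact hy ((hlf x).mem_toFinset.mpr h)
    simp [h0]
  have hμext : ∀ (x : V) (F : V → ℝ) (W : Finset V), (∀ y, μ x y ≠ 0 → y ∈ W) →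
      ∑' y, μ x y * F y = ∑ y ∈ W, μ x y * F y := by
    intro x F W hW
    apply tsum_eq_sum
    intro y hy
    have h0 : μ x y = 0 := by
      by_contra h
      exact hy (hW y h)
    simp [h0]
  -- the Laplacian of `f` has finite support
  have hwfin : (Function.support w).Finite := by
    set B : Finset V := hf.toFinset ∪ hf.toFinset.biUnion (fun z => (hlf z).toFinset) with hBdef
    apply Set.Finite.subset B.finite_toSet
    intro x hx
    by_contra hxB
    apply hx
    have hfx : f x = 0 := by
      by_contra h
      exact hxB (Finset.mem_union_left _ (hf.mem_toFinset.mpr h))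
    have hall : ∀ y, μ x y * (f y - f x) = 0 := by
      intro y
      rcases eq_or_ne (f y) 0 with h0 | h0
      · rw [hfx, h0]; ring
      · have hyB : x ∈ (hlf y).toFinset → False := by
          intro hmem
          exact hxB (Finset.mem_union_right _
            (Finset.mem_biUnion.mpr ⟨y, hf.mem_toFinset.mpr h0, hmem⟩))
        have hμ0 : μ y x = 0 := by
          by_contra h
          exact hyB ((hlf y).mem_toFinset.mpr h)
        rw [hsym x y, hμ0]; ring
    show w x = 0
    rw [hwdef]
    unfold lap
    rw [show (∑' y, μ x y * (f y - f x)) = ∑' _ : V, (0:ℝ) from tsum_congr hall, tsum_zero,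
      mul_zero]
  have hfsq : Summable (fun x => f x ^ 2 * m x) := by
    apply summable_of_ne_finset_zero (s := hf.toFinset)
    intro x hx
    have : f x = 0 := by
      by_contra h
      exact hx (hf.mem_toFinset.mpr h)
    simp [this]
  have hwsq : Summable (fun x => w x ^ 2 * m x) := by
    apply summable_of_ne_finset_zero (s := hwfin.toFinset)
    intro x hx
    have : w x = 0 := by
      by_contra h
      exact hx (hwfin.mem_toFinset.mpr h)
    simp [this]
  have hgsq := hPl2 f hfsq t ht
  have hlapg : P t w = lap m μ g := hPcomm f hf t
  have hhsq := hPl2 w hwsq t ht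
  set N := l2n m f * l2n m w with hNdef
  have hN0 : 0 ≤ N := mul_nonneg (Real.sqrt_nonneg _) (Real.sqrt_nonneg _)
  set Fsq := ∑' x, f x ^ 2 * m x with hFsqdef
  have hFsq0 : 0 ≤ Fsq := tsum_nonneg (fun x => mul_nonneg (sq_nonneg _) (hm x).le)
  set G := fun x => ∑' y, μ x y * (g y - g x) ^ 2 with hGdef
  have hG0 : ∀ x, 0 ≤ G x :=
    fun x => tsum_nonneg (fun y => mul_nonneg (hnn x y) (sq_nonneg _))
  have hη1 : ∀ k x, η k x ≤ 1 := fun k x =>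
    (monotone_nat_of_le_succ (fun n => hηmono n x)).ge_of_tendsto (hηlim x) k
  -- the cutoff bound on partial sums of `G`
  have stepA : ∀ T : Finset V, ∑ x ∈ T, G x ≤ 8 * N := by
    intro T
    have key : ∀ k : ℕ, 1 ≤ k →
        ∑ x ∈ T, (max (η k x) 0) ^ 2 * G x ≤ 8 * N + 16 / (k : ℝ) * Fsq := by
      intro k hk
      have hkpos : (0 : ℝ) < k := by exact_mod_cast hk
      set ψ := fun x => max (η k x) 0 with hψdef
      have hψ0 : ∀ x, 0 ≤ ψ x := fun x => le_max_right _ _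
      have hψ1 : ∀ x, ψ x ≤ 1 := fun x => max_le (hη1 k x) zero_le_one
      have hψsq1 : ∀ x, ψ x ^ 2 ≤ 1 := by
        intro x; nlinarith [hψ0 x, hψ1 x]
      have hψgam : ∀ x, ∑' y, μ x y * (ψ y - ψ x) ^ 2 ≤ 2 * m x / k := by
        intro x
        have h1 : ∑' y, μ x y * (ψ y - ψ x) ^ 2 ≤ ∑' y, μ x y * (η k y - η k x) ^ 2 := by
          apply Summable.tsum_le_tsum _ (hμrow x _) (hμrow x _)
          intro y
          have habs : |ψ y - ψ x| ≤ |η k y - η k x| := abs_max_sub_max_le_abs _ _ _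
          have hsq : (ψ y - ψ x) ^ 2 ≤ (η k y - η k x) ^ 2 := by
            rw [← sq_abs (ψ y - ψ x), ← sq_abs (η k y - η k x)]
            exact pow_le_pow_left₀ (abs_nonneg _) habs 2
          exact mul_le_mul_of_nonneg_left hsq (hnn x y)
        have h2 : ∑' y, μ x y * (η k y - η k x) ^ 2 = 2 * m x * gam m μ (η k) (η k) x := by
          unfold gam
          rw [show (∑' y, μ x y * (η k y - η k x) * (η k y - η k x))
              = ∑' y, μ x y * (η k y - η k x) ^ 2 from tsum_congr (fun y => by ring)]
          field_simp
          rw [mul_div_cancel_right₀ _ (hmne x)]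
        have h3 := hηgam k x hk
        calc ∑' y, μ x y * (ψ y - ψ x) ^ 2 ≤ 2 * m x * gam m μ (η k) (η k) x := by
              rw [← h2]; exact h1
          _ ≤ 2 * m x * (1 / k) := by
              apply mul_le_mul_of_nonneg_left h3 (by linarith [hm x])
          _ = 2 * m x / k := by ring
      set S : Finset V := T ∪ (hηfin k).toFinset with hSdef
      set W : Finset V := S ∪ S.biUnion (fun z => (hlf z).toFinset) with hWdef
      have hSW : S ⊆ W := Finset.subset_union_left
      have hTS : T ⊆ S := Finset.subset_union_left
      have hTW : T ⊆ W := hTS.trans hSW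
      have hnbr : ∀ x ∈ S, ∀ y, μ x y ≠ 0 → y ∈ W := by
        intro x hx y hy
        exact Finset.mem_union_right _
          (Finset.mem_biUnion.mpr ⟨x, hx, (hlf x).mem_toFinset.mpr hy⟩)
      have hψS : ∀ x, ψ x ≠ 0 → x ∈ S := by
        intro x hx
        apply Finset.mem_union_right
        apply (hηfin k).mem_toFinset.mpr
        intro h0
        apply hx
        rw [hψdef]
        simp [h0]
      set u := fun x => ψ x ^ 2 * g x with hudef
      have huS : ∀ x, u x ≠ 0 → x ∈ S := by
        intro x hx
        apply hψS
        intro h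
        apply hx
        rw [hudef]
        simp [h]
      set Mh := fun x => ∑' y, μ x y * (g y - g x) with hMhdef
      have hMhW : ∀ x ∈ S, Mh x = ∑ y ∈ W, μ x y * (g y - g x) :=
        fun x hx => hμext x _ W (hnbr x hx)
      have hMh_lap : ∀ x, Mh x = m x * lap m μ g x := by
        intro x
        rw [hMhdef]
        unfold lap
        field_simp
        rw [mul_div_cancel_right₀ _ (hmne x)]
      -- Green's formula on the finite set `W`
      have green : ∑ x ∈ W, ∑ y ∈ W, μ x y * (u y - u x) * (g y - g x)
          = -2 * ∑ x ∈ W, u x * Mh x := by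
        have expand : ∀ x ∈ W, ∑ y ∈ W, μ x y * (u y - u x) * (g y - g x)
            = (∑ y ∈ W, μ x y * u y * (g y - g x)) - u x * ∑ y ∈ W, μ x y * (g y - g x) := by
          intro x _
          rw [Finset.mul_sum, ← Finset.sum_sub_distrib]
          exact Finset.sum_congr rfl (fun y _ => by ring)
        rw [Finset.sum_congr rfl expand, Finset.sum_sub_distrib]
        have e1 : ∑ x ∈ W, ∑ y ∈ W, μ x y * u y * (g y - g x) = -∑ x ∈ W, u x * Mh x := by
          rw [Finset.sum_comm]
          rw [show ∑ y ∈ W, ∑ x ∈ W, μ x y * u y * (g y - g x)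
              = ∑ y ∈ W, -(u y * Mh y) from Finset.sum_congr rfl ?_, Finset.sum_neg_distrib]
          intro y _
          by_cases hy : u y = 0
          · simp [hy]
          · calc ∑ x ∈ W, μ x y * u y * (g y - g x)
                = ∑ x ∈ W, -(u y * (μ y x * (g x - g y))) := by
                  exact Finset.sum_congr rfl (fun x _ => by rw [hsym x y]; ring)
              _ = -(u y * ∑ x ∈ W, μ y x * (g x - g y)) := by
                  rw [Finset.sum_neg_distrib, Finset.mul_sum]
              _ = -(u y * Mh y) := by rw [hMhW y (huS y hy)]
        have e2 : ∀ x ∈ W, u x * ∑ y ∈ W, μ x y * (g y - g x) = u x * Mh x := by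
          intro x _
          by_cases hx : u x = 0
          · simp [hx]
          · rw [hMhW x (huS x hx)]
        rw [e1, Finset.sum_congr rfl e2]
        ring
      -- splitting into the energy part and the error part
      set E1 := ∑ x ∈ W, ∑ y ∈ W, μ x y * ((ψ x ^ 2 + ψ y ^ 2) / 2) * (g y - g x) ^ 2
        with hE1def
      set R := ∑ x ∈ W, ∑ y ∈ W, μ x y * ((g y + g x) / 2) * (ψ y ^ 2 - ψ x ^ 2) * (g y - g x)
        with hRdef
      have split : E1 + R = -2 * ∑ x ∈ W, u x * Mh x := by
        rw [← green, hE1def, hRdef, ← Finset.sum_add_distrib]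
        apply Finset.sum_congr rfl
        intro x _
        rw [← Finset.sum_add_distrib]
        apply Finset.sum_congr rfl
        intro y _
        rw [hudef]
        ring
      have hE1term : ∀ x y, 0 ≤ μ x y * ((ψ x ^ 2 + ψ y ^ 2) / 2) * (g y - g x) ^ 2 :=
        fun x y => mul_nonneg (mul_nonneg (hnn x y) (by positivity)) (sq_nonneg _)
      have hE1inner : ∀ x, 0 ≤ ∑ y ∈ W, μ x y * ((ψ x ^ 2 + ψ y ^ 2) / 2) * (g y - g x) ^ 2 :=
        fun x => Finset.sum_nonneg (fun y _ => hE1term x y)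
      -- Cauchy-Schwarz bound
      have b1 : ∑ x ∈ W, g x ^ 2 * m x ≤ Fsq :=
        le_trans (Summable.sum_le_tsum W (fun x _ => mul_nonneg (sq_nonneg _) (hm x).le) hgsq.1) hgsq.2
      have b2 : ∑ x ∈ W, (lap m μ g x) ^ 2 * m x ≤ ∑' x, w x ^ 2 * m x := by
        rw [← hlapg]
        exact le_trans (Summable.sum_le_tsum W (fun x _ => mul_nonneg (sq_nonneg _) (hm x).le) hhsq.1)
          hhsq.2
      have hCS : ∑ x ∈ W, |g x| * |lap m μ g x| * m x ≤ N := by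
        have cs := Finset.sum_mul_sq_le_sq_mul_sq W (fun x => |g x| * Real.sqrt (m x))
          (fun x => |lap m μ g x| * Real.sqrt (m x))
        have e1 : ∀ x : V, (|g x| * Real.sqrt (m x)) * (|lap m μ g x| * Real.sqrt (m x))
            = |g x| * |lap m μ g x| * m x := by
          intro x
          rw [show (|g x| * Real.sqrt (m x)) * (|lap m μ g x| * Real.sqrt (m x))
              = |g x| * |lap m μ g x| * (Real.sqrt (m x) * Real.sqrt (m x)) from by ring,
            Real.mul_self_sqrt (hm x).le]
        have e2 : ∀ x : V, (|g x| * Real.sqrt (m x)) ^ 2 = g x ^ 2 * m x := by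
          intro x
          rw [mul_pow, sq_abs, Real.sq_sqrt (hm x).le]
        have e3 : ∀ x : V, (|lap m μ g x| * Real.sqrt (m x)) ^ 2 = (lap m μ g x) ^ 2 * m x := by
          intro x
          rw [mul_pow, sq_abs, Real.sq_sqrt (hm x).le]
        rw [Finset.sum_congr rfl (fun x _ => e1 x), Finset.sum_congr rfl (fun x _ => e2 x),
          Finset.sum_congr rfl (fun x _ => e3 x)] at cs
        have hN2 : N ^ 2 = Fsq * ∑' x, w x ^ 2 * m x := by
          rw [hNdef]
          unfold l2n
          rw [mul_pow, Real.sq_sqrt (tsum_nonneg (fun x => mul_nonneg (sq_nonneg _) (hm x).le)),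
            Real.sq_sqrt (tsum_nonneg (fun x => mul_nonneg (sq_nonneg _) (hm x).le))]
        have hsq : (∑ x ∈ W, |g x| * |lap m μ g x| * m x) ^ 2 ≤ N ^ 2 := by
          rw [hN2]
          refine le_trans cs ?_
          apply mul_le_mul b1 b2 (Finset.sum_nonneg (fun x _ =>
            mul_nonneg (sq_nonneg _) (hm x).le)) hFsq0
        have hnng : 0 ≤ ∑ x ∈ W, |g x| * |lap m μ g x| * m x :=
          Finset.sum_nonneg (fun x _ =>
            mul_nonneg (mul_nonneg (abs_nonneg _) (abs_nonneg _)) (hm x).le)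
        calc ∑ x ∈ W, |g x| * |lap m μ g x| * m x
            = Real.sqrt ((∑ x ∈ W, |g x| * |lap m μ g x| * m x) ^ 2) :=
              (Real.sqrt_sq hnng).symm
          _ ≤ Real.sqrt (N ^ 2) := Real.sqrt_le_sqrt hsq
          _ = N := Real.sqrt_sq hN0
      -- bound the main term
      have hB : -2 * ∑ x ∈ W, u x * Mh x ≤ 2 * N := by
        have hterm : ∀ x ∈ W, -(u x * Mh x) ≤ |g x| * |lap m μ g x| * m x := by
          intro x _
          have h1 : |u x * Mh x| ≤ |g x| * |lap m μ g x| * m x := by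
            rw [hMh_lap x, hudef]
            rw [abs_mul, abs_mul, abs_mul, abs_of_nonneg (sq_nonneg (ψ x)),
              abs_of_nonneg (hm x).le]
            have := hψsq1 x
            have h0 := hψ0 x
            nlinarith [abs_nonneg (g x), abs_nonneg (lap m μ g x), (hm x).le,
              mul_nonneg (abs_nonneg (g x)) (abs_nonneg (lap m μ g x)),
              mul_nonneg (mul_nonneg (abs_nonneg (g x)) (abs_nonneg (lap m μ g x))) (hm x).le]
          linarith [neg_abs_le (u x * Mh x)]
        calc -2 * ∑ x ∈ W, u x * Mh x = 2 * ∑ x ∈ W, -(u x * Mh x) := by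
              rw [Finset.sum_neg_distrib]; ring
          _ ≤ 2 * ∑ x ∈ W, |g x| * |lap m μ g x| * m x := by
              have := Finset.sum_le_sum hterm
              linarith
          _ ≤ 2 * N := by linarith [hCS]
      -- bound the error term
      set D := ∑ x ∈ W, ∑ y ∈ W, μ x y * (g y ^ 2 + g x ^ 2) * (ψ y - ψ x) ^ 2 with hDdef
      have hterm2 : ∀ x y, |μ x y * ((g y + g x) / 2) * (ψ y ^ 2 - ψ x ^ 2) * (g y - g x)|
          ≤ 1 / 2 * (μ x y * ((ψ x ^ 2 + ψ y ^ 2) / 2) * (g y - g x) ^ 2)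
            + μ x y * (g y ^ 2 + g x ^ 2) * (ψ y - ψ x) ^ 2 := by
        intro x y
        have hc := hnn x y
        have h1 : |μ x y * ((g y + g x) / 2) * (ψ y ^ 2 - ψ x ^ 2) * (g y - g x)|
            = μ x y * |((g y + g x) / 2) * (ψ y ^ 2 - ψ x ^ 2) * (g y - g x)| := by
          rw [show μ x y * ((g y + g x) / 2) * (ψ y ^ 2 - ψ x ^ 2) * (g y - g x)
              = μ x y * (((g y + g x) / 2) * (ψ y ^ 2 - ψ x ^ 2) * (g y - g x)) from by ring,
            abs_mul, abs_of_nonneg hc]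
        rw [h1]
        have h2 := stmt8_aux_abs (ψ x) (ψ y) (g x) (g y)
        calc μ x y * |((g y + g x) / 2) * (ψ y ^ 2 - ψ x ^ 2) * (g y - g x)|
            ≤ μ x y * (1 / 2 * (((ψ x ^ 2 + ψ y ^ 2) / 2) * (g y - g x) ^ 2)
              + (g y ^ 2 + g x ^ 2) * (ψ y - ψ x) ^ 2) := mul_le_mul_of_nonneg_left h2 hc
          _ = 1 / 2 * (μ x y * ((ψ x ^ 2 + ψ y ^ 2) / 2) * (g y - g x) ^ 2)
              + μ x y * (g y ^ 2 + g x ^ 2) * (ψ y - ψ x) ^ 2 := by ring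
      have hRabs : |R| ≤ 1 / 2 * E1 + D := by
        calc |R| ≤ ∑ x ∈ W, |∑ y ∈ W, μ x y * ((g y + g x) / 2) * (ψ y ^ 2 - ψ x ^ 2)
              * (g y - g x)| := Finset.abs_sum_le_sum_abs _ _
          _ ≤ ∑ x ∈ W, ∑ y ∈ W, |μ x y * ((g y + g x) / 2) * (ψ y ^ 2 - ψ x ^ 2)
              * (g y - g x)| :=
              Finset.sum_le_sum (fun x _ => Finset.abs_sum_le_sum_abs _ _)
          _ ≤ ∑ x ∈ W, ∑ y ∈ W, (1 / 2 * (μ x y * ((ψ x ^ 2 + ψ y ^ 2) / 2) * (g y - g x) ^ 2)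
              + μ x y * (g y ^ 2 + g x ^ 2) * (ψ y - ψ x) ^ 2) :=
              Finset.sum_le_sum (fun x _ => Finset.sum_le_sum (fun y _ => hterm2 x y))
          _ = 1 / 2 * E1 + D := by
              rw [hE1def, hDdef, Finset.mul_sum, ← Finset.sum_add_distrib]
              apply Finset.sum_congr rfl
              intro x _
              rw [Finset.mul_sum, ← Finset.sum_add_distrib]
      have hrowψ : ∀ x : V, ∑ y ∈ W, μ x y * (ψ y - ψ x) ^ 2 ≤ 2 * m x / k := by
        intro x
        refine le_trans (Summable.sum_le_tsum W (fun y _ => mul_nonneg (hnn x y) (sq_nonneg _))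
          (hμrow x _)) (hψgam x)
      have hD2 : ∑ x ∈ W, ∑ y ∈ W, μ x y * g x ^ 2 * (ψ y - ψ x) ^ 2 ≤ 2 / k * Fsq := by
        have hin : ∀ x ∈ W, ∑ y ∈ W, μ x y * g x ^ 2 * (ψ y - ψ x) ^ 2
            ≤ g x ^ 2 * (2 * m x / k) := by
          intro x _
          rw [show ∑ y ∈ W, μ x y * g x ^ 2 * (ψ y - ψ x) ^ 2
              = g x ^ 2 * ∑ y ∈ W, μ x y * (ψ y - ψ x) ^ 2 from by
            rw [Finset.mul_sum]; exact Finset.sum_congr rfl (fun y _ => by ring)]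
          exact mul_le_mul_of_nonneg_left (hrowψ x) (sq_nonneg _)
        calc ∑ x ∈ W, ∑ y ∈ W, μ x y * g x ^ 2 * (ψ y - ψ x) ^ 2
            ≤ ∑ x ∈ W, g x ^ 2 * (2 * m x / k) := Finset.sum_le_sum hin
          _ = 2 / k * ∑ x ∈ W, g x ^ 2 * m x := by
              rw [Finset.mul_sum]
              exact Finset.sum_congr rfl (fun x _ => by ring)
          _ ≤ 2 / k * Fsq := by
              apply mul_le_mul_of_nonneg_left b1 (by positivity)
      have hD1 : ∑ x ∈ W, ∑ y ∈ W, μ x y * g y ^ 2 * (ψ y - ψ x) ^ 2 ≤ 2 / k * Fsq := by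
        rw [Finset.sum_comm]
        have hswap : ∀ y ∈ W, ∑ x ∈ W, μ x y * g y ^ 2 * (ψ y - ψ x) ^ 2
            = ∑ x ∈ W, μ y x * g y ^ 2 * (ψ x - ψ y) ^ 2 :=
          fun y _ => Finset.sum_congr rfl (fun x _ => by rw [hsym x y]; ring)
        rw [Finset.sum_congr rfl hswap]
        have hin : ∀ y ∈ W, ∑ x ∈ W, μ y x * g y ^ 2 * (ψ x - ψ y) ^ 2
            ≤ g y ^ 2 * (2 * m y / k) := by
          intro y _
          rw [show ∑ x ∈ W, μ y x * g y ^ 2 * (ψ x - ψ y) ^ 2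
              = g y ^ 2 * ∑ x ∈ W, μ y x * (ψ x - ψ y) ^ 2 from by
            rw [Finset.mul_sum]; exact Finset.sum_congr rfl (fun x _ => by ring)]
          exact mul_le_mul_of_nonneg_left (hrowψ y) (sq_nonneg _)
        calc ∑ y ∈ W, ∑ x ∈ W, μ y x * g y ^ 2 * (ψ x - ψ y) ^ 2
            ≤ ∑ y ∈ W, g y ^ 2 * (2 * m y / k) := Finset.sum_le_sum hin
          _ = 2 / k * ∑ y ∈ W, g y ^ 2 * m y := by
              rw [Finset.mul_sum]
              exact Finset.sum_congr rfl (fun y _ => by ring)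
          _ ≤ 2 / k * Fsq := by
              apply mul_le_mul_of_nonneg_left b1 (by positivity)
      have hD : D ≤ 4 / k * Fsq := by
        have hDsplit : D = (∑ x ∈ W, ∑ y ∈ W, μ x y * g y ^ 2 * (ψ y - ψ x) ^ 2)
            + ∑ x ∈ W, ∑ y ∈ W, μ x y * g x ^ 2 * (ψ y - ψ x) ^ 2 := by
          rw [hDdef, ← Finset.sum_add_distrib]
          apply Finset.sum_congr rfl
          intro x _
          rw [← Finset.sum_add_distrib]
          exact Finset.sum_congr rfl (fun y _ => by ring)
        rw [hDsplit]
        have : 2 / (k:ℝ) * Fsq + 2 / k * Fsq = 4 / k * Fsq := by ring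
        linarith [hD1, hD2]
      -- combining everything: bound for E1
      have hE1b : E1 ≤ 4 * N + 8 / k * Fsq := by
        have h1 : E1 ≤ -2 * ∑ x ∈ W, u x * Mh x + |R| := by
          have := neg_abs_le R
          linarith [split]
        have h2 : E1 ≤ 2 * N + 1 / 2 * E1 + D := by linarith [hB, hRabs]
        have h8 : 8 / (k : ℝ) * Fsq = 2 * (4 / (k : ℝ) * Fsq) := by ring
        linarith [hD]
      -- lower bound: the partial sum over T
      have hGW : ∀ x ∈ S, G x = ∑ y ∈ W, μ x y * (g y - g x) ^ 2 :=
        fun x hx => hμext x _ W (hnbr x hx)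
      have hlow : ∑ x ∈ T, ψ x ^ 2 * G x ≤ 2 * E1 := by
        have step1 : ∀ x ∈ T, ψ x ^ 2 * G x
            ≤ ∑ y ∈ W, 2 * (μ x y * ((ψ x ^ 2 + ψ y ^ 2) / 2) * (g y - g x) ^ 2) := by
          intro x hx
          rw [hGW x (hTS hx), Finset.mul_sum]
          apply Finset.sum_le_sum
          intro y _
          nlinarith [mul_nonneg (mul_nonneg (hnn x y) (sq_nonneg (ψ y))) (sq_nonneg (g y - g x)),
            mul_nonneg (hnn x y) (sq_nonneg (g y - g x)), sq_nonneg (ψ y)]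
        calc ∑ x ∈ T, ψ x ^ 2 * G x
            ≤ ∑ x ∈ T, ∑ y ∈ W, 2 * (μ x y * ((ψ x ^ 2 + ψ y ^ 2) / 2) * (g y - g x) ^ 2) :=
              Finset.sum_le_sum step1
          _ ≤ ∑ x ∈ W, ∑ y ∈ W, 2 * (μ x y * ((ψ x ^ 2 + ψ y ^ 2) / 2) * (g y - g x) ^ 2) :=
              Finset.sum_le_sum_of_subset_of_nonneg hTW (fun x _ _ =>
                Finset.sum_nonneg (fun y _ => mul_nonneg (by norm_num) (hE1term x y)))
          _ = 2 * E1 := by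
              rw [hE1def, Finset.mul_sum]
              apply Finset.sum_congr rfl
              intro x _
              rw [Finset.mul_sum]
      calc ∑ x ∈ T, ψ x ^ 2 * G x ≤ 2 * E1 := hlow
        _ ≤ 8 * N + 16 / k * Fsq := by
            have h16 : 16 / (k : ℝ) * Fsq = 2 * (8 / (k : ℝ) * Fsq) := by ring
            linarith [hE1b]
    -- take the limit k → ∞
    have hL : Tendsto (fun k => ∑ x ∈ T, (max (η k x) 0) ^ 2 * G x) atTop
        (nhds (∑ x ∈ T, G x)) := by
      apply tendsto_finset_sum
      intro x _
      have h1 : Tendsto (fun k => max (η k x) 0) atTop (nhds 1) := by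
        have := (hηlim x).max (tendsto_const_nhds (x := (0:ℝ)))
        simpa using this
      have h2 : Tendsto (fun k => (max (η k x) 0) ^ 2 * G x) atTop (nhds (1 ^ 2 * G x)) :=
        (h1.pow 2).mul_const _
      simpa using h2
    have hRt : Tendsto (fun k : ℕ => 8 * N + 16 / (k : ℝ) * Fsq) atTop (nhds (8 * N)) := by
      have h1 : Tendsto (fun k : ℕ => 16 / (k : ℝ)) atTop (nhds 0) :=
        tendsto_const_div_atTop_nhds_zero_nat 16
      have h2 : Tendsto (fun k : ℕ => 8 * N + 16 / (k : ℝ) * Fsq) atTop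
          (nhds (8 * N + 0 * Fsq)) := tendsto_const_nhds.add (h1.mul_const Fsq)
      simpa using h2
    refine le_of_tendsto_of_tendsto hL hRt ?_
    filter_upwards [eventually_ge_atTop 1] with k hk using key k hk
  -- assembling the conclusion
  set A := fun p : V × V => μ p.1 p.2 * (g p.2 - g p.1) ^ 2 with hAdef
  have hApos : ∀ p, 0 ≤ A p := fun p => mul_nonneg (hnn _ _) (sq_nonneg _)
  have hAfin : ∀ F : Finset (V × V), ∑ p ∈ F, A p ≤ 8 * N := by
    intro F
    have hsub : F ⊆ (F.image Prod.fst) ×ˢ (F.image Prod.snd) := by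
      intro p hp
      rw [Finset.mem_product]
      exact ⟨Finset.mem_image_of_mem _ hp, Finset.mem_image_of_mem _ hp⟩
    calc ∑ p ∈ F, A p ≤ ∑ p ∈ (F.image Prod.fst) ×ˢ (F.image Prod.snd), A p :=
          Finset.sum_le_sum_of_subset_of_nonneg hsub (fun p _ _ => hApos p)
      _ = ∑ x ∈ F.image Prod.fst, ∑ y ∈ F.image Prod.snd, A (x, y) :=
          Finset.sum_product _ _ _
      _ ≤ ∑ x ∈ F.image Prod.fst, G x := by
          apply Finset.sum_le_sum
          intro x _
          exact Summable.sum_le_tsum _ (fun y _ => mul_nonneg (hnn x y) (sq_nonneg _)) (hμrow x _)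
      _ ≤ 8 * N := stepA _
  have hAs : Summable A := summable_of_sum_le (fun p => hApos p) hAfin
  have htsumA : ∑' p, A p ≤ 8 * N := Summable.tsum_le_of_sum_le hAs hAfin
  have hGs : Summable G := summable_of_sum_le (fun x => hG0 x) stepA
  have htsumG : ∑' x, G x ≤ 8 * N := Summable.tsum_le_of_sum_le hGs stepA
  have hprod : ∑' p, A p = ∑' x, ∑' y, A (x, y) :=
    Summable.tsum_prod' hAs (fun x => hμrow x _)
  have hQN : QN μ g = (1 / 2) * ∑' x, G x := by
    unfold QN
    rw [show (∑' p : V × V, μ p.1 p.2 * (g p.2 - g p.1) ^ 2) = ∑' p, A p from rfl, hprod]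
  have hGam : ∑' x, gam m μ g g x * m x = (1 / 2) * ∑' x, G x := by
    rw [← tsum_mul_left]
    apply tsum_congr
    intro x
    unfold gam
    rw [show (∑' y, μ x y * (g y - g x) * (g y - g x)) = G x from
      tsum_congr (fun y => by ring)]
    field_simp
    rw [mul_div_cancel_left₀ _ (hmne x)]
  constructor
  · rw [hQN, hGam]
  · rw [hQN]
    have h4 : (1 / 2) * ∑' x, G x ≤ 4 * N := by linarith [htsumG]
    have : 100 * l2n m f * l2n m w = 100 * N := by rw [hNdef]; ring
    rw [this]
    linarith [hN0]
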